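/- Let Y be a reduced scheme of finite type over a field k and Z a closed subvariety. If every closed point p ∈ Y is contained in a closed projective (complete) subvariety of Y that intersects Z, then the restriction map on global regular functions k[Y] → k[Z] is injective. -/

import Mathlib

open AlgebraicGeometry CategoryTheory TopologicalSpace Polynomial

/-- The affine line over a field is not universally closed. -/
lemma aux_not_universallyClosed_A1 (k : Type) [Field k] :
    ¬ UniversallyClosed (Spec.map (CommRingCat.ofHom (Polynomial.C : k →+* k[X]))) := by
  intro h
  have hex : ValuativeCriterion.Existence
      (Spec.map (CommRingCat.ofHom (Polynomial.C : k →+* k[X]))) := by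
    rw [UniversallyClosed.eq_valuativeCriterion] at h
    exact h.1
  set R : Type := PowerSeries k with hR
  set K : Type := FractionRing R with hK
  have hXne : (algebraMap R K) PowerSeries.X ≠ 0 := by
    intro h
    exact PowerSeries.X_ne_zero (IsFractionRing.injective R K (by simpa using h))
  set u : K := ((algebraMap R K) PowerSeries.X)⁻¹ with hu
  set τ₁ : k[X] →+* K :=
    Polynomial.eval₂RingHom ((algebraMap R K).comp (PowerSeries.C (R := k))) u with hτ₁
  have hcomm : CommSq (Spec.map (CommRingCat.ofHom τ₁))
      (Spec.map (CommRingCat.ofHom (algebraMap R K)))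
      (Spec.map (CommRingCat.ofHom (Polynomial.C : k →+* k[X])))
      (Spec.map (CommRingCat.ofHom (PowerSeries.C (R := k)))) := by
    constructor
    rw [← Spec.map_comp, ← Spec.map_comp]
    congr 1
    ext a
    simp [τ₁]
  let S : ValuativeCommSq (Spec.map (CommRingCat.ofHom (Polynomial.C : k →+* k[X]))) :=
    { R := R
      K := K
      i₁ := Spec.map (CommRingCat.ofHom τ₁)
      i₂ := Spec.map (CommRingCat.ofHom (PowerSeries.C (R := k)))
      commSq := hcomm }
  obtain ⟨⟨l⟩⟩ := hex S
  set τ : CommRingCat.of k[X] ⟶ CommRingCat.of R := (Spec.fullyFaithful.preimage l.l).unop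
    with hτ
  have hl : Spec.map τ = l.l := by
    show Scheme.Spec.map ((Spec.fullyFaithful.preimage l.l).unop).op = l.l
    rw [Quiver.Hom.op_unop]
    exact Spec.fullyFaithful.map_preimage l.l
  have hfac : Spec.map (CommRingCat.ofHom (algebraMap R K)) ≫ l.l =
      Spec.map (CommRingCat.ofHom τ₁) := l.fac_left
  rw [← hl, ← Spec.map_comp] at hfac
  have hcomp : τ ≫ CommRingCat.ofHom (algebraMap R K) = CommRingCat.ofHom τ₁ :=
    Spec.map_injective hfac
  have hX : (algebraMap R K) (τ Polynomial.X) = u := by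
    have := congrArg (fun (f : CommRingCat.of k[X] ⟶ CommRingCat.of K) =>
      f.hom Polynomial.X) hcomp
    simpa [τ₁] using this
  have hmul : (algebraMap R K) (τ Polynomial.X * PowerSeries.X) = (algebraMap R K) 1 := by
    rw [map_mul, hX, map_one, hu, inv_mul_cancel₀ hXne]
  have h1 : (τ Polynomial.X) * PowerSeries.X = 1 := IsFractionRing.injective R K hmul
  have h2 : IsUnit (PowerSeries.X : R) := IsUnit.of_mul_eq_one _ (by rwa [mul_comm])
  rw [PowerSeries.isUnit_iff_constantCoeff] at h2
  simp at h2

/-- On an integral scheme proper over a field, a global section vanishing at one point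
vanishes everywhere. -/
lemma aux_basicOpen_eq_bot (k : Type) [Field k] (P : Scheme) [IsIntegral P]
    (π : P ⟶ Spec (CommRingCat.of k)) [IsProper π]
    (g : Γ(P, ⊤)) (q₀ : P) (h₀ : q₀ ∉ P.basicOpen g) :
    P.basicOpen g = ⊥ := by
  classical
  -- the structure map on global sections
  set cP : CommRingCat.of k ⟶ Γ(P, ⊤) :=
    (Scheme.ΓSpecIso (CommRingCat.of k)).inv ≫ π.appTop with hcP
  have hπ : π = P.toSpecΓ ≫ Spec.map cP := by
    have h1 := Scheme.toSpecΓ_naturality π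
    rw [← SpecMap_ΓSpecIso_hom] at h1
    rw [hcP, Spec.map_comp, ← Category.assoc, ← h1, Category.assoc, ← Spec.map_comp,
      Iso.inv_hom_id, Spec.map_id, Category.comp_id]
  set ψ : CommRingCat.of k[X] ⟶ Γ(P, ⊤) :=
    CommRingCat.ofHom (Polynomial.eval₂RingHom cP.hom g) with hψ
  set φ : P ⟶ Spec (CommRingCat.of k[X]) := P.toSpecΓ ≫ Spec.map ψ with hφ
  have hCψ : CommRingCat.ofHom (Polynomial.C : k →+* k[X]) ≫ ψ = cP := by
    ext a
    simp [ψ]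
  have hφπ : φ ≫ Spec.map (CommRingCat.ofHom (Polynomial.C : k →+* k[X])) = π := by
    rw [hφ, Category.assoc, ← Spec.map_comp, hCψ, ← hπ]
  -- φ is universally closed
  have hOP : MorphismProperty.HasOfPostcompProperty @UniversallyClosed @IsSeparated := by
    infer_instance
  have hUC : UniversallyClosed φ := by
    refine hOP.of_postcomp φ (Spec.map (CommRingCat.ofHom (Polynomial.C : k →+* k[X])))
      inferInstance ?_
    rw [hφπ]
    infer_instance
  have hclosedmap : IsClosedMap φ.base := Scheme.Hom.isClosedMap φ
  -- the image of φ
  set S : Set (PrimeSpectrum k[X]) := Set.range φ.base with hS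
  have hSclosed : IsClosed S := by
    have := hclosedmap Set.univ isClosed_univ
    rwa [Set.image_univ] at this
  have hSirr : IsIrreducible S := by
    have := (IrreducibleSpace.isIrreducible_univ P).image φ.base
      (Scheme.Hom.continuous φ).continuousOn
    rwa [Set.image_univ] at this
  have hq : (PrimeSpectrum.vanishingIdeal S).IsPrime :=
    PrimeSpectrum.isIrreducible_iff_vanishingIdeal_isPrime.mp hSirr
  have hSzero : S = PrimeSpectrum.zeroLocus (PrimeSpectrum.vanishingIdeal S) := by
    rw [PrimeSpectrum.zeroLocus_vanishingIdeal_eq_closure, hSclosed.closure_eq]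
  -- translation of basicOpen membership
  have h2 : Spec.map ψ ⁻¹ᵁ PrimeSpectrum.basicOpen (Polynomial.X : k[X]) =
      PrimeSpectrum.basicOpen (ψ.hom Polynomial.X) := by
    ext x
    show (Spec.map ψ).base x ∈ PrimeSpectrum.basicOpen _ ↔ _
    rw [Spec.map_base]
    rw [← PrimeSpectrum.comap_basicOpen]
    exact Iff.rfl
  have hψX : ψ.hom Polynomial.X = g := by
    simp [ψ, Polynomial.coe_eval₂RingHom]
  have hpre : φ ⁻¹ᵁ (PrimeSpectrum.basicOpen (Polynomial.X : k[X])) = P.basicOpen g := by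
    show P.toSpecΓ ⁻¹ᵁ (Spec.map ψ ⁻¹ᵁ PrimeSpectrum.basicOpen (Polynomial.X : k[X])) = _
    rw [h2, hψX, Scheme.toSpecΓ_preimage_basicOpen]
  have hmem : ∀ t : P, t ∈ P.basicOpen g ↔ Polynomial.X ∉ (φ.base t).asIdeal := by
    intro t
    rw [← hpre]
    rfl
  have hX₀ : Polynomial.X ∈ (φ.base q₀).asIdeal := by
    by_contra hcon
    exact h₀ ((hmem q₀).mpr hcon)
  by_cases hbot : PrimeSpectrum.vanishingIdeal S = ⊥
  · exfalso
    have hsurj : Function.Surjective φ.base := by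
      rw [← Set.range_eq_univ]
      have : S = Set.univ := by
        rw [hSzero, hbot]
        simp [PrimeSpectrum.zeroLocus_bot]
      exact this
    haveI : Surjective φ := ⟨hsurj⟩
    haveI : UniversallyClosed (φ ≫ Spec.map (CommRingCat.ofHom (Polynomial.C : k →+* k[X]))) := by
      rw [hφπ]; infer_instance
    exact aux_not_universallyClosed_A1 k (UniversallyClosed.of_comp_surjective φ _)
  · have hmax := hq.isMaximal hbot
    have hmemS : φ.base q₀ ∈ S := Set.mem_range_self q₀
    have hsub : (PrimeSpectrum.vanishingIdeal S : Ideal k[X]) ≤ (φ.base q₀).asIdeal := by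
      rw [hSzero] at hmemS
      exact (PrimeSpectrum.mem_zeroLocus _ _).mp hmemS
    have heq : (PrimeSpectrum.vanishingIdeal S : Ideal k[X]) = (φ.base q₀).asIdeal :=
      hmax.eq_of_le (φ.base q₀).isPrime.ne_top hsub
    have hall : ∀ t : P, Polynomial.X ∈ (φ.base t).asIdeal := by
      intro t
      have ht : φ.base t ∈ S := Set.mem_range_self t
      rw [hSzero] at ht
      exact (PrimeSpectrum.mem_zeroLocus _ _).mp ht (heq ▸ hX₀)
    ext t
    simp only [Opens.coe_bot, Set.mem_empty_iff_false, iff_false]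
    intro ht
    exact (hmem t).mp ht (hall t)

/-- A scheme locally of finite type over a field is a Jacobson space. -/
lemma aux_jacobsonSpace (k : Type) [Field k] (Y : Scheme) (sY : Y ⟶ Spec (CommRingCat.of k))
    [LocallyOfFiniteType sY] : JacobsonSpace Y := by
  exact LocallyOfFiniteType.jacobsonSpace sY

/-- **Functions are determined on a subvariety met by complete subvarieties.**
Let `Y` be a reduced scheme of finite type over a field `k` and `ι : Z ⟶ Y` a
closed subvariety.  If every closed point `p ∈ Y` is contained in a closed
projective (complete, integral) subvariety of `Y` that intersects `Z`, then the
restriction map on global regular functions `k[Y] → k[Z]` is injective. -/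
theorem stmt_19 (k : Type) [Field k]
    (Y Z : Scheme) (sY : Y ⟶ Spec (CommRingCat.of k))
    [IsReduced Y] [LocallyOfFiniteType sY] [CompactSpace Y]
    (ι : Z ⟶ Y) [IsClosedImmersion ι]
    (hcover : ∀ p : Y, IsClosed ({p} : Set Y) →
      ∃ (P : Scheme) (j : P ⟶ Y), IsClosedImmersion j ∧ IsIntegral P ∧
        IsProper (j ≫ sY) ∧ p ∈ Set.range j.base ∧
        (Set.range j.base ∩ Set.range ι.base).Nonempty) :
    Function.Injective (Scheme.Γ.map ι.op) := by
  haveI hJ : JacobsonSpace Y := aux_jacobsonSpace k Y sY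
  refine (injective_iff_map_eq_zero _).mpr fun (f : Γ(Y, ⊤)) hf => ?_
  apply eq_zero_of_basicOpen_eq_bot (X := Y) (U := ⊤) f
  by_contra hbo
  have hne : (Y.basicOpen f : Set Y).Nonempty := by
    by_contra hcon
    rw [Set.not_nonempty_iff_eq_empty] at hcon
    exact hbo (by ext1; rw [hcon]; rfl)
  have hd : Dense (closedPoints Y) := by
    rw [dense_iff_closure_eq]
    exact closure_closedPoints
  obtain ⟨p, hpc, hpb⟩ := hd.exists_mem_open (Y.basicOpen f).isOpen hne
  obtain ⟨P, j, hj, hint, hproper, hp, hmeet⟩ := hcover p hpc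
  haveI := hj; haveI := hint; haveI := hproper
  obtain ⟨q, hq⟩ := hp
  set g : ↑Γ(P, ⊤) := j.appTop f with hg
  have hqg : q ∈ P.basicOpen g := by
    have hmem : q ∈ j ⁻¹ᵁ Y.basicOpen f := by
      show j.base q ∈ Y.basicOpen f
      rw [hq]; exact hpb
    rwa [Scheme.preimage_basicOpen] at hmem
  obtain ⟨z, ⟨q₀, hq₀⟩, ⟨w, hw⟩⟩ := hmeet
  have h0 : ι.appTop f = 0 := by rwa [Scheme.Γ_map] at hf
  have h₀ : q₀ ∉ P.basicOpen g := by
    intro hcon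
    have hz : z ∈ Y.basicOpen f := by
      rw [← hq₀]
      have : q₀ ∈ j ⁻¹ᵁ Y.basicOpen f := by rwa [Scheme.preimage_basicOpen]
      exact this
    have hw' : w ∈ ι ⁻¹ᵁ Y.basicOpen f := by
      show ι.base w ∈ Y.basicOpen f
      rw [hw]; exact hz
    rw [Scheme.preimage_basicOpen] at hw'
    rw [show (ι.app ⊤) f = 0 from h0, Scheme.basicOpen_zero] at hw'
    exact hw'
  have hbot := aux_basicOpen_eq_bot k P (j ≫ sY) g q₀ h₀
  rw [hbot] at hqg
  exact hqg
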